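/- Let R be a commutative Noetherian ring, I an ideal, and M an R-module. For any α ≥ 1, the natural map M/I^α M → \hat{M}^I / I^α \hat{M}^I is an isomorphism; in particular the I-adic completion \hat{M}^I of an arbitrary module M is itself I-adically complete. -/

import Mathlib

section Aux

variable {R : Type*} [CommRing R] {M : Type*} [AddCommGroup M] [Module R M]

/-- Elements of `span s • N` are sums `∑ i ∈ s, i • g i` with `g i ∈ N`. -/
lemma exists_sum_of_mem_span_smul (s : Finset R) (N : Submodule R M) {x : M}
    (hx : x ∈ Ideal.span (s : Set R) • N) :
    ∃ g : R → M, (∀ i, g i ∈ N) ∧ x = ∑ i ∈ s, i • g i := by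
  refine Submodule.smul_induction_on hx ?_ ?_
  · intro r hr n hn
    rw [show Ideal.span (s : Set R) = Submodule.span R (s : Set R) from rfl] at hr
    obtain ⟨c, -, hc⟩ := Submodule.mem_span_finset.mp hr
    refine ⟨fun i => c i • n, fun i => N.smul_mem _ hn, ?_⟩
    rw [← hc, Finset.sum_smul]
    refine Finset.sum_congr rfl fun i _ => ?_
    rw [smul_eq_mul, mul_comm, mul_smul]
  · rintro x y ⟨g, hg, rfl⟩ ⟨g', hg', rfl⟩
    exact ⟨g + g', fun i => N.add_mem (hg i) (hg' i), by
      rw [← Finset.sum_add_distrib]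
      exact Finset.sum_congr rfl fun i _ => (smul_add _ _ _).symm⟩

/-- The key lemma: over a Noetherian ring the kernel of the evaluation
`\hat{M}^I → M/I^α M` is `I^α • \hat{M}^I`. -/
lemma ker_eval_eq (R : Type*) [CommRing R] [IsNoetherianRing R] (I : Ideal R)
    (M : Type*) [AddCommGroup M] [Module R M] (α : ℕ) :
    LinearMap.ker (AdicCompletion.eval I M α) =
      (I ^ α • ⊤ : Submodule R (AdicCompletion I M)) := by
  apply le_antisymm
  · -- hard direction
    obtain ⟨s, hs'⟩ := (isNoetherian_def.mp inferInstance (I ^ α) : (I ^ α).FG)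
    have hs : Ideal.span (s : Set R) = I ^ α := hs'
    intro x hx
    obtain ⟨a, rfl⟩ := AdicCompletion.mk_surjective I M x
    have hx0 : Submodule.mkQ (I ^ α • ⊤ : Submodule R M) (a α) = 0 := hx
    -- shifted sequence
    set b : ℕ → M := fun n => a (n + α) with hb
    have hbmem : ∀ n, b n ∈ (I ^ α • ⊤ : Submodule R M) := by
      intro n
      have := AdicCompletion.AdicCauchySequence.mk_eq_mk (Nat.le_add_left α n) a
      rw [← Submodule.Quotient.mk_eq_zero]
      rw [show ((Submodule.Quotient.mk (b n)) :
        M ⧸ (I ^ α • ⊤ : Submodule R M)) = Submodule.mkQ _ (a (n + α)) from rfl]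
      rw [show (Submodule.mkQ (I ^ α • ⊤ : Submodule R M)) (a (n + α)) =
        Submodule.mkQ _ (a α) from this]
      exact hx0
    have hbd : ∀ n, b (n + 1) - b n ∈
        Ideal.span (s : Set R) • (I ^ n • ⊤ : Submodule R M) := by
      intro n
      have h1 : a (n + α) ≡ a (n + 1 + α) [SMOD (I ^ (n + α) • ⊤ : Submodule R M)] :=
        a.property (by omega)
      have h2 : b (n + 1) - b n ∈ (I ^ (n + α) • ⊤ : Submodule R M) := by
        have := (SModEq.sub_mem.mp h1.symm)
        simpa [hb] using this
      have heq : (I ^ (n + α) • ⊤ : Submodule R M) =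
          Ideal.span (s : Set R) • (I ^ n • ⊤ : Submodule R M) := by
        rw [hs, pow_add, mul_comm, ← Ideal.smul_eq_mul, Submodule.smul_assoc]
      rwa [heq] at h2
    have hb0 : b 0 ∈ Ideal.span (s : Set R) • (⊤ : Submodule R M) := by
      rw [hs]
      exact hbmem 0
    -- choose coefficient sequences
    choose g hgmem hgsum using fun n => exists_sum_of_mem_span_smul s _ (hbd n)
    obtain ⟨h, -, hhsum⟩ := exists_sum_of_mem_span_smul s ⊤ hb0
    -- the partial-sum sequences
    set y : R → ℕ → M := fun i n => h i + ∑ k ∈ Finset.range n, g k i with hy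
    have hycauchy : ∀ i, ∀ n, y i n ≡ y i (n + 1)
        [SMOD (I ^ n • ⊤ : Submodule R M)] := by
      intro i n
      rw [SModEq.sub_mem]
      have : y i n - y i (n + 1) = -(g n i) := by
        simp [hy, Finset.sum_range_succ]
      rw [this]
      exact neg_mem (hgmem n i)
    have hysum : ∀ n, ∑ i ∈ s, i • y i n = b n := by
      intro n
      have : ∑ i ∈ s, i • y i n
          = (∑ i ∈ s, i • h i) + ∑ k ∈ Finset.range n, ∑ i ∈ s, i • g k i := by
        rw [Finset.sum_comm (s := Finset.range n)]
        rw [← Finset.sum_add_distrib]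
        refine Finset.sum_congr rfl fun i _ => ?_
        rw [hy]
        simp [smul_add, Finset.smul_sum]
      rw [this, ← hhsum]
      have : ∑ k ∈ Finset.range n, ∑ i ∈ s, i • g k i
          = ∑ k ∈ Finset.range n, (b (k + 1) - b k) :=
        Finset.sum_congr rfl fun k _ => (hgsum k).symm
      rw [this, Finset.sum_range_sub]
      abel
    -- the completion elements
    set Y : R → AdicCompletion I M := fun i =>
      AdicCompletion.mk I M ⟨y i, (AdicCompletion.isAdicCauchy_iff I M (y i)).mpr (hycauchy i)⟩ with hY
    have hxeq : AdicCompletion.mk I M a = ∑ i ∈ s, i • Y i := by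
      apply AdicCompletion.ext
      intro n
      rw [AdicCompletion.val_sum_apply]
      have hrhs : ∑ i ∈ s, ((i • Y i).val n) =
          Submodule.mkQ (I ^ n • ⊤ : Submodule R M) (∑ i ∈ s, i • y i n) := by
        rw [map_sum]
        refine Finset.sum_congr rfl fun i _ => ?_
        rw [AdicCompletion.val_smul]
        rfl
      rw [hrhs, hysum n]
      have := AdicCompletion.AdicCauchySequence.mk_eq_mk (Nat.le_add_right n α) a
      exact this.symm
    rw [hxeq]
    refine Submodule.sum_mem _ fun i hi => ?_
    refine Submodule.smul_mem_smul ?_ Submodule.mem_top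
    rw [← hs]
    exact Ideal.subset_span hi
  · -- easy direction
    intro x hx
    rw [LinearMap.mem_ker]
    refine Submodule.smul_induction_on hx ?_ ?_
    · intro r hr z _
      rw [map_smul]
      obtain ⟨m, hm⟩ := Submodule.mkQ_surjective (I ^ α • ⊤ : Submodule R M)
        (AdicCompletion.eval I M α z)
      rw [← hm, ← map_smul, Submodule.mkQ_apply, Submodule.Quotient.mk_eq_zero]
      exact Submodule.smul_mem_smul hr Submodule.mem_top
    · intro z w hz hw
      rw [map_add, hz, hw, add_zero]

end Aux

/-- The natural map `M/I^α M → \hat{M}^I / I^α \hat{M}^I` induced by the canonical map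
`M → \hat{M}^I` into the `I`-adic completion. -/
noncomputable def completionModMap (R : Type*) [CommRing R] (I : Ideal R)
    (M : Type*) [AddCommGroup M] [Module R M] (α : ℕ) :
    (M ⧸ (I ^ α • ⊤ : Submodule R M)) →ₗ[R]
      (AdicCompletion I M ⧸ (I ^ α • ⊤ : Submodule R (AdicCompletion I M))) :=
  Submodule.mapQ _ _ (AdicCompletion.of I M) (by
    rw [← Submodule.map_le_iff_le_comap, Submodule.map_smul'']
    exact Submodule.smul_mono le_rfl le_top)

/-- Let `R` be a commutative Noetherian ring, `I` an ideal, and `M` an `R`-module. For any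
`α ≥ 1` the natural map `M/I^α M → \hat{M}^I / I^α \hat{M}^I` is an isomorphism; in
particular the `I`-adic completion `\hat{M}^I` of an arbitrary module `M` is itself
`I`-adically complete. -/
theorem stmt18 (R : Type*) [CommRing R] [IsNoetherianRing R] (I : Ideal R)
    (M : Type*) [AddCommGroup M] [Module R M] :
    (∀ α : ℕ, 1 ≤ α → Function.Bijective (completionModMap R I M α)) ∧
      IsAdicComplete I (AdicCompletion I M) := by
  constructor
  · intro α _
    set ψ : (AdicCompletion I M ⧸ (I ^ α • ⊤ : Submodule R (AdicCompletion I M))) →ₗ[R]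
        (M ⧸ (I ^ α • ⊤ : Submodule R M)) :=
      Submodule.liftQ _ (AdicCompletion.eval I M α)
        (le_of_eq (ker_eval_eq R I M α).symm) with hψ
    have hleft : Function.LeftInverse ψ (completionModMap R I M α) := by
      intro x
      obtain ⟨m, rfl⟩ := Submodule.mkQ_surjective _ x
      rw [completionModMap, Submodule.mkQ_apply, Submodule.mapQ_apply, hψ,
        Submodule.liftQ_apply]
      rfl
    have hright : Function.RightInverse ψ (completionModMap R I M α) := by
      intro x
      obtain ⟨z, rfl⟩ := Submodule.mkQ_surjective _ x
      rw [hψ, Submodule.mkQ_apply, Submodule.liftQ_apply]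
      obtain ⟨m, hm⟩ := Submodule.mkQ_surjective (I ^ α • ⊤ : Submodule R M)
        (AdicCompletion.eval I M α z)
      rw [← hm, completionModMap, Submodule.mkQ_apply, Submodule.mapQ_apply]
      rw [Submodule.Quotient.eq, ← ker_eval_eq R I M α, LinearMap.mem_ker, map_sub]
      rw [show AdicCompletion.eval I M α (AdicCompletion.of I M m) =
        Submodule.mkQ _ m from rfl, hm, sub_self]
    exact ⟨hleft.injective, hright.surjective⟩
  · have h1 : IsHausdorff I (AdicCompletion I M) := by
      constructor
      -- Hausdorff
      intro x hx
      apply AdicCompletion.ext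
      intro n
      have : x ∈ LinearMap.ker (AdicCompletion.eval I M n) := by
        rw [ker_eval_eq R I M n]
        exact SModEq.zero.mp (hx n)
      simpa using this
    have h2 : IsPrecomplete I (AdicCompletion I M) := by
      constructor
      intro f hf
      have key : ∀ {m n : ℕ}, m ≤ n →
          AdicCompletion.eval I M m (f m) = AdicCompletion.eval I M m (f n) := by
        intro m n hmn
        have : f m - f n ∈ LinearMap.ker (AdicCompletion.eval I M m) := by
          rw [ker_eval_eq R I M m]
          exact SModEq.sub_mem.mp (hf hmn)
        rw [LinearMap.mem_ker, map_sub, sub_eq_zero] at this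
        exact this
      refine ⟨⟨fun n => (f n).val n, ?_⟩, ?_⟩
      · intro m n hmn
        have h1 : AdicCompletion.transitionMap I M hmn ((f n).val n) = (f n).val m :=
          AdicCompletion.transitionMap_comp_eval_apply I M hmn (f n)
        rw [h1]
        exact (key hmn).symm
      · intro n
        refine SModEq.sub_mem.mpr ?_
        rw [← ker_eval_eq R I M n, LinearMap.mem_ker]
        refine (map_sub _ _ _).trans ?_
        have : AdicCompletion.eval I M n
            (⟨fun n => (f n).val n, by
              intro m n hmn
              rw [AdicCompletion.transitionMap_comp_eval_apply I M hmn (f n)]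
              exact (key hmn).symm⟩ : AdicCompletion I M) = (f n).val n := rfl
        rw [this]
        rw [show AdicCompletion.eval I M n (f n) = (f n).val n from rfl, sub_self]
    exact { toIsHausdorff := h1, toIsPrecomplete := h2 }
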